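/- Quadratic remainder bound (Lemma on smooth nonlinearity bounders, scalar component): let g : ℝᵐ → ℝ be twice continuously differentiable, q ∈ ℝᵐ, Q ∈ 𝕊₊^m, S ∈ ℝ^{m×m} invertible, and D ⊆ ℝᵐ a convex set containing the ellipsoid E(q,Q). Suppose F̄ ≥ ‖(∂²g/∂y²)(y) · S‖_F for all y ∈ D. Then for every y ∈ E(q,Q), the Taylor remainder n(y−q) := g(y) − g(q) − ∇g(q)ᵀ(y−q) satisfies |n(y−q)| ≤ (1/2) F̄ ‖S⁻¹ Q‖_F. -/

import Mathlib

open Matrix MeasureTheory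

noncomputable def ellipsoid {m : ℕ} {Q : Matrix (Fin m) (Fin m) ℝ}
    (q : Fin m → ℝ) (hQ : Q.PosSemidef) : Set (Fin m → ℝ) :=
  {x | ∃ v : Fin m → ℝ, v ⬝ᵥ v ≤ 1 ∧ x = q + ((hQ.1.eigenvectorUnitary : Matrix (Fin m) (Fin m) ℝ) *
    diagonal ((RCLike.ofReal : ℝ → ℝ) ∘ (√·) ∘ hQ.1.eigenvalues) *
    (star (hQ.1.eigenvectorUnitary : Matrix (Fin m) (Fin m) ℝ))).mulVec v}

noncomputable def frob {p q : ℕ} (M : Matrix (Fin p) (Fin q) ℝ) : ℝ :=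
  Real.sqrt (Matrix.trace (Mᵀ * M))

noncomputable def hess {m : ℕ} (g : (Fin m → ℝ) → ℝ) (y : Fin m → ℝ) :
    Matrix (Fin m) (Fin m) ℝ :=
  Matrix.of fun i j => fderiv ℝ (fun z => fderiv ℝ g z (Pi.single j 1)) y (Pi.single i 1)

/-! ### Auxiliary lemmas: Frobenius norm -/

lemma trace_tmul {p q : ℕ} (M : Matrix (Fin p) (Fin q) ℝ) :
    Matrix.trace (Mᵀ * M) = ∑ j, ∑ i, (M i j)^2 := by
  simp [Matrix.trace, Matrix.mul_apply, Matrix.diag, sq]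

lemma trace_tmul_nonneg {p q : ℕ} (M : Matrix (Fin p) (Fin q) ℝ) :
    0 ≤ Matrix.trace (Mᵀ * M) := by
  rw [trace_tmul]
  positivity

lemma frob_nonneg {p q : ℕ} (M : Matrix (Fin p) (Fin q) ℝ) : 0 ≤ frob M :=
  Real.sqrt_nonneg _

lemma frob_mul_le {p q r : ℕ} (A : Matrix (Fin p) (Fin q) ℝ) (B : Matrix (Fin q) (Fin r) ℝ) :
    frob (A * B) ≤ frob A * frob B := by
  have h1 : Matrix.trace ((A*B)ᵀ * (A*B)) ≤ Matrix.trace (Aᵀ*A) * Matrix.trace (Bᵀ*B) := by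
    rw [trace_tmul, trace_tmul, trace_tmul]
    calc ∑ j, ∑ i, ((A*B) i j)^2
        ≤ ∑ j, ∑ i : Fin p, (∑ k, (A i k)^2) * (∑ k, (B k j)^2) := by
          refine Finset.sum_le_sum fun j _ => Finset.sum_le_sum fun i _ => ?_
          simpa [Matrix.mul_apply] using
            Finset.sum_mul_sq_le_sq_mul_sq Finset.univ (fun k => A i k) (fun k => B k j)
      _ = (∑ k, ∑ i, (A i k)^2) * ∑ j, ∑ k, (B k j)^2 := by
          rw [Finset.sum_comm (γ := Fin q) (f := fun k i => (A i k)^2), Finset.sum_mul_sum]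
          rw [Finset.sum_comm (γ := Fin r)]
  calc frob (A*B) = Real.sqrt (Matrix.trace ((A*B)ᵀ * (A*B))) := rfl
    _ ≤ Real.sqrt (Matrix.trace (Aᵀ*A) * Matrix.trace (Bᵀ*B)) := Real.sqrt_le_sqrt h1
    _ = frob A * frob B := by
        rw [Real.sqrt_mul (trace_tmul_nonneg A)]; rfl

lemma quad_abs_le_frob {n : ℕ} (M : Matrix (Fin n) (Fin n) ℝ) (v : Fin n → ℝ)
    (hv : v ⬝ᵥ v ≤ 1) : |v ⬝ᵥ M.mulVec v| ≤ frob M := by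
  have hvsum : (∑ i, (v i)^2) ≤ 1 := by simpa [dotProduct, sq] using hv
  have hvnn : 0 ≤ ∑ i, (v i)^2 := by positivity
  have key : (v ⬝ᵥ M.mulVec v)^2 ≤ ∑ j, ∑ i, (M i j)^2 := by
    have cs1 : (v ⬝ᵥ M.mulVec v)^2 ≤ (∑ i, (v i)^2) * (∑ i, (M.mulVec v i)^2) := by
      simpa [dotProduct] using
        Finset.sum_mul_sq_le_sq_mul_sq Finset.univ (fun i => v i) (fun i => M.mulVec v i)
    have cs2 : ∀ i, (M.mulVec v i)^2 ≤ (∑ j, (M i j)^2) * (∑ j, (v j)^2) := by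
      intro i
      simpa [Matrix.mulVec, dotProduct] using
        Finset.sum_mul_sq_le_sq_mul_sq Finset.univ (fun j => M i j) (fun j => v j)
    have h3 : (∑ i, (M.mulVec v i)^2) ≤ ∑ i, ∑ j, (M i j)^2 := by
      calc (∑ i, (M.mulVec v i)^2) ≤ ∑ i, (∑ j, (M i j)^2) * (∑ j, (v j)^2) :=
            Finset.sum_le_sum fun i _ => cs2 i
        _ ≤ ∑ i, ∑ j, (M i j)^2 := Finset.sum_le_sum fun i _ => by
            have : (0:ℝ) ≤ ∑ j, (M i j)^2 := by positivity
            nlinarith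
    calc (v ⬝ᵥ M.mulVec v)^2 ≤ (∑ i, (v i)^2) * (∑ i, (M.mulVec v i)^2) := cs1
      _ ≤ ∑ i, ∑ j, (M i j)^2 := by
          have h4 : (0:ℝ) ≤ ∑ i, (M.mulVec v i)^2 := by positivity
          nlinarith
      _ = ∑ j, ∑ i, (M i j)^2 := Finset.sum_comm
  calc |v ⬝ᵥ M.mulVec v| = Real.sqrt ((v ⬝ᵥ M.mulVec v)^2) := (Real.sqrt_sq_eq_abs _).symm
    _ ≤ Real.sqrt (∑ j, ∑ i, (M i j)^2) := Real.sqrt_le_sqrt key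
    _ = frob M := by rw [frob, trace_tmul]

lemma trace_sq_le {n : ℕ} (P : Matrix (Fin n) (Fin n) ℝ) :
    Matrix.trace (P*P) ≤ Matrix.trace (Pᵀ*P) := by
  have h1 : Matrix.trace (P*P) = ∑ i, ∑ j, P i j * P j i := by
    simp [Matrix.trace, Matrix.mul_apply, Matrix.diag]
  have h2 : Matrix.trace (Pᵀ*P) = ∑ i, ∑ j, P i j * P i j := by
    rw [trace_tmul, Finset.sum_comm]
    simp [sq]
  have h3 : 0 ≤ ∑ i, ∑ j, (P i j - P j i)^2 := by positivity
  have h4 : ∑ i, ∑ j, (P i j - P j i)^2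
      = (∑ i, ∑ j, P i j * P i j) + (∑ i, ∑ j, P j i * P j i)
        - 2*(∑ i, ∑ j, P i j * P j i) := by
    rw [← Finset.sum_add_distrib, Finset.mul_sum, ← Finset.sum_sub_distrib]
    refine Finset.sum_congr rfl fun i _ => ?_
    rw [← Finset.sum_add_distrib, Finset.mul_sum, ← Finset.sum_sub_distrib]
    exact Finset.sum_congr rfl fun j _ => by ring
  have h5 : ∑ i, ∑ j, P j i * P j i = ∑ i, ∑ j, P i j * P i j := Finset.sum_comm
  rw [h1, h2]
  rw [h4, h5] at h3
  linarith

lemma frob_sandwich {n : ℕ} {H Q R : Matrix (Fin n) (Fin n) ℝ}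
    (hH : Hᵀ = H) (hR : Rᵀ = R) (hRR : R*R = Q) :
    frob (R*H*R) ≤ frob (H*Q) := by
  have hQt : Qᵀ = Q := by rw [← hRR, Matrix.transpose_mul, hR]
  have e1 : (R*H*R)ᵀ = R*H*R := by
    rw [Matrix.transpose_mul, Matrix.transpose_mul, hH, hR]
    noncomm_ring
  have cyc : ∀ A B : Matrix (Fin n) (Fin n) ℝ, Matrix.trace (A*B) = Matrix.trace (B*A) :=
    Matrix.trace_mul_comm
  have key : Matrix.trace ((R*H*R)ᵀ*(R*H*R)) = Matrix.trace ((H*Q)*(H*Q)) := by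
    rw [e1]
    calc Matrix.trace ((R*H*R)*(R*H*R)) = Matrix.trace (R*(H*R*R*H*R)) := by
          congr 1; noncomm_ring
      _ = Matrix.trace ((H*R*R*H*R)*R) := cyc _ _
      _ = Matrix.trace ((H*Q)*(H*Q)) := by congr 1; rw [← hRR]; noncomm_ring
  have ineq : Matrix.trace ((R*H*R)ᵀ*(R*H*R)) ≤ Matrix.trace ((H*Q)ᵀ*(H*Q)) := by
    rw [key]
    exact trace_sq_le (H*Q)
  exact Real.sqrt_le_sqrt ineq

lemma key_matrix {n : ℕ} {H Q R S : Matrix (Fin n) (Fin n) ℝ}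
    (hH : Hᵀ = H) (hR : Rᵀ = R) (hRR : R*R = Q) (hS : IsUnit S.det)
    (v : Fin n → ℝ) (hv : v ⬝ᵥ v ≤ 1) :
    |(R.mulVec v) ⬝ᵥ H.mulVec (R.mulVec v)| ≤ frob (H*S) * frob (S⁻¹*Q) := by
  have e : v ⬝ᵥ (R*H*R).mulVec v = (R.mulVec v) ⬝ᵥ H.mulVec (R.mulVec v) := by
    rw [← Matrix.mulVec_mulVec, ← Matrix.mulVec_mulVec, dotProduct_mulVec v R]
    congr 1
    conv_lhs => rw [← hR]
    rw [Matrix.vecMul_transpose]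
  rw [← e]
  have hfq : frob (H*Q) ≤ frob (H*S) * frob (S⁻¹*Q) := by
    have : H*Q = (H*S)*(S⁻¹*Q) := by
      rw [show (H*S)*(S⁻¹*Q) = H*((S*S⁻¹)*Q) by noncomm_ring, Matrix.mul_nonsing_inv S hS,
        Matrix.one_mul]
    rw [this]
    exact frob_mul_le _ _
  calc |v ⬝ᵥ (R*H*R).mulVec v| ≤ frob (R*H*R) := quad_abs_le_frob _ v hv
    _ ≤ frob (H*Q) := frob_sandwich hH hR hRR
    _ ≤ frob (H*S) * frob (S⁻¹*Q) := hfq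

/-! ### Auxiliary lemmas: bilinear forms and the Hessian -/

lemma single_decomp {m : ℕ} (δ : Fin m → ℝ) :
    δ = ∑ j, δ j • (Pi.single j 1 : Fin m → ℝ) := by
  funext i
  rw [Finset.sum_apply]
  simp [Pi.single_apply, Finset.sum_ite_eq', mul_comm]

lemma clm_decomp {m : ℕ} (δ : Fin m → ℝ) (T : (Fin m → ℝ) →L[ℝ] ℝ) :
    T δ = ∑ i, δ i * T (Pi.single i 1) := by
  conv_lhs => rw [single_decomp δ]
  rw [map_sum]
  exact Finset.sum_congr rfl fun i _ => by rw [_root_.map_smul]; simp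

lemma bilin_quad {m : ℕ} (B : (Fin m → ℝ) →L[ℝ] (Fin m → ℝ) →L[ℝ] ℝ) (δ : Fin m → ℝ)
    (H : Matrix (Fin m) (Fin m) ℝ)
    (hH : ∀ i j, H i j = B (Pi.single i 1) (Pi.single j 1)) :
    B δ δ = δ ⬝ᵥ H.mulVec δ := by
  have e1 : B δ δ = ∑ j, δ j * (B δ (Pi.single j 1)) := clm_decomp δ (B δ)
  have e2 : ∀ j : Fin m, B δ (Pi.single j 1) = ∑ i, δ i * H i j := by
    intro j
    have := clm_decomp δ (B.flip (Pi.single j 1))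
    simp only [ContinuousLinearMap.flip_apply] at this
    rw [this]
    exact Finset.sum_congr rfl fun i _ => by rw [hH]
  rw [e1]
  simp only [dotProduct, Matrix.mulVec, e2]
  simp only [Finset.mul_sum]
  rw [Finset.sum_comm]
  refine Finset.sum_congr rfl fun i _ => Finset.sum_congr rfl fun j _ => by ring

lemma hess_eq {m : ℕ} {g : (Fin m → ℝ) → ℝ} (hg : ContDiff ℝ 2 g) (x : Fin m → ℝ)
    (i j : Fin m) :
    hess g x i j = fderiv ℝ (fderiv ℝ g) x (Pi.single i 1) (Pi.single j 1) := by
  have hdf : DifferentiableAt ℝ (fderiv ℝ g) x :=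
    (hg.fderiv_right (m := 1) (by norm_num)).differentiable (by norm_num) x
  show fderiv ℝ (fun z => fderiv ℝ g z (Pi.single j 1)) x (Pi.single i 1) = _
  rw [fderiv_clm_apply hdf (differentiableAt_const _)]
  simp

lemma hess_symm_entries {m : ℕ} {g : (Fin m → ℝ) → ℝ} (hg : ContDiff ℝ 2 g) (x : Fin m → ℝ)
    (v w : Fin m → ℝ) :
    fderiv ℝ (fderiv ℝ g) x v w = fderiv ℝ (fderiv ℝ g) x w v :=
  second_derivative_symmetric (x := x)
    (fun y => ((hg.differentiable (by norm_num)) y).hasFDerivAt)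
    ((((hg.fderiv_right (m := 1) (by norm_num)).differentiable (by norm_num)) x).hasFDerivAt) v w

lemma hess_symm {m : ℕ} {g : (Fin m → ℝ) → ℝ} (hg : ContDiff ℝ 2 g) (x : Fin m → ℝ) :
    (hess g x)ᵀ = hess g x := by
  funext i j
  rw [Matrix.transpose_apply, hess_eq hg, hess_eq hg, hess_symm_entries hg]

/-! ### Main theorem -/

theorem stmt12 {m : ℕ} (g : (Fin m → ℝ) → ℝ) (hg : ContDiff ℝ 2 g)
    (q : Fin m → ℝ) {Q : Matrix (Fin m) (Fin m) ℝ} (hQ : Q.PosSemidef)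
    (S : Matrix (Fin m) (Fin m) ℝ) (hS : IsUnit S.det)
    (D : Set (Fin m → ℝ)) (hD : Convex ℝ D) (hsub : ellipsoid q hQ ⊆ D)
    (F : ℝ) (hF : ∀ y ∈ D, frob (hess g y * S) ≤ F) :
    ∀ y ∈ ellipsoid q hQ,
      |g y - g q - fderiv ℝ g q (y - q)| ≤ (1 / 2) * F * frob (S⁻¹ * Q) := by
  intro y hy
  obtain ⟨v, hv, hyv⟩ := hy
  set R := ((hQ.1.eigenvectorUnitary : Matrix (Fin m) (Fin m) ℝ) *
    diagonal ((RCLike.ofReal : ℝ → ℝ) ∘ (√·) ∘ hQ.1.eigenvalues) *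
    (star (hQ.1.eigenvectorUnitary : Matrix (Fin m) (Fin m) ℝ))) with hRdef
  have hRsymm : Rᵀ = R := by
    have h : Rᴴ = R := by
      simp [hRdef, Matrix.star_eq_conjTranspose, Matrix.conjTranspose_mul, Matrix.mul_assoc]
    simpa [Matrix.conjTranspose_eq_transpose_of_trivial] using h
  have hRR : R * R = Q := by
    calc R * R = (hQ.1.eigenvectorUnitary : Matrix (Fin m) (Fin m) ℝ) *
          (diagonal ((RCLike.ofReal : ℝ → ℝ) ∘ (√·) ∘ hQ.1.eigenvalues) *
          ((star (hQ.1.eigenvectorUnitary : Matrix (Fin m) (Fin m) ℝ)) *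
            (hQ.1.eigenvectorUnitary : Matrix (Fin m) (Fin m) ℝ)) *
          diagonal ((RCLike.ofReal : ℝ → ℝ) ∘ (√·) ∘ hQ.1.eigenvalues)) *
          (star (hQ.1.eigenvectorUnitary : Matrix (Fin m) (Fin m) ℝ)) := by
            simp only [hRdef, Matrix.mul_assoc]
      _ = (hQ.1.eigenvectorUnitary : Matrix (Fin m) (Fin m) ℝ) *
          diagonal ((RCLike.ofReal : ℝ → ℝ) ∘ hQ.1.eigenvalues) *
          (star (hQ.1.eigenvectorUnitary : Matrix (Fin m) (Fin m) ℝ)) := by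
            rw [Unitary.coe_star_mul_self, Matrix.mul_one,
              Matrix.diagonal_mul_diagonal]
            congr 3
            funext i
            simp [Real.mul_self_sqrt (hQ.eigenvalues_nonneg i)]
      _ = Q := by
            conv_rhs => rw [hQ.1.spectral_theorem]
            simp [Unitary.conjStarAlgAut_apply]
  set δ : Fin m → ℝ := y - q with hδdef
  have hδv : δ = R.mulVec v := by rw [hδdef, hyv]; abel
  -- memberships in D
  have hyD : y ∈ D := hsub ⟨v, hv, hyv⟩
  have hqD : q ∈ D := hsub ⟨0, by simp [dotProduct], by simp⟩
  have hseg : ∀ s : ℝ, s ∈ Set.Icc (0:ℝ) 1 → q + s • δ ∈ D := by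
    intro s hs
    have h := hD hqD hyD (by linarith [hs.2] : (0:ℝ) ≤ 1 - s) hs.1 (by ring)
    have e : (1 - s) • q + s • y = q + s • δ := by
      rw [hδdef]; funext i; simp [smul_eq_mul, Pi.sub_apply]; ring
    rwa [e] at h
  -- derivative setup
  have hdg : Differentiable ℝ g := hg.differentiable (by norm_num)
  have hf1 : ContDiff ℝ 1 (fderiv ℝ g) := hg.fderiv_right (m := 1) (by norm_num)
  have hdf : Differentiable ℝ (fderiv ℝ g) := hf1.differentiable one_ne_zero
  set c : ℝ → (Fin m → ℝ) := fun t => q + t • δ with hcdef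
  have hc' : ∀ t : ℝ, HasDerivAt c δ t := fun t => by
    simpa [hcdef] using ((hasDerivAt_id t).smul_const δ).const_add q
  set ψ : ℝ → ℝ := fun t => fderiv ℝ g (c t) δ with hψdef
  have hφ : ∀ t : ℝ, HasDerivAt (fun t => g (c t)) (ψ t) t := fun t =>
    (hdg (c t)).hasFDerivAt.comp_hasDerivAt t (hc' t)
  have hψ' : ∀ t : ℝ, HasDerivAt ψ (fderiv ℝ (fderiv ℝ g) (c t) δ δ) t := by
    intro t
    have h1 : HasDerivAt (fun t => fderiv ℝ g (c t)) (fderiv ℝ (fderiv ℝ g) (c t) δ) t :=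
      (hdf (c t)).hasFDerivAt.comp_hasDerivAt t (hc' t)
    exact (ContinuousLinearMap.apply ℝ ℝ δ).hasFDerivAt.comp_hasDerivAt t h1
  have hψcont : Continuous ψ := by
    have h1 : Continuous (fun t => fderiv ℝ g (c t)) := by
      have hcc : Continuous c := continuous_const.add (continuous_id.smul continuous_const)
      exact hf1.continuous.comp hcc
    exact (ContinuousLinearMap.apply ℝ ℝ δ).continuous.comp h1
  set K : ℝ := F * frob (S⁻¹ * Q) with hKdef
  -- pointwise bound on the second derivative along the segment
  have hbound : ∀ s : ℝ, s ∈ Set.Icc (0:ℝ) 1 → |fderiv ℝ (fderiv ℝ g) (c s) δ δ| ≤ K := by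
    intro s hs
    have hmem : c s ∈ D := hseg s hs
    rw [bilin_quad (fderiv ℝ (fderiv ℝ g) (c s)) δ (hess g (c s))
      (fun i j => hess_eq hg (c s) i j), hδv]
    calc |(R.mulVec v) ⬝ᵥ (hess g (c s)).mulVec (R.mulVec v)|
        ≤ frob (hess g (c s) * S) * frob (S⁻¹ * Q) :=
          key_matrix (hess_symm hg (c s)) hRsymm hRR hS v hv
      _ ≤ K := by
          rw [hKdef]
          exact mul_le_mul_of_nonneg_right (hF _ hmem) (frob_nonneg _)
  -- mean value inequality: |ψ t - ψ 0| ≤ K * t on [0,1]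
  have hmvt : ∀ t : ℝ, t ∈ Set.Icc (0:ℝ) 1 → |ψ t - ψ 0| ≤ K * t := by
    intro t ht
    have h := Convex.norm_image_sub_le_of_norm_hasDerivWithin_le
      (f := ψ) (f' := fun s => fderiv ℝ (fderiv ℝ g) (c s) δ δ)
      (fun s hs => (hψ' s).hasDerivWithinAt)
      (fun s hs => by
        rw [Real.norm_eq_abs]; exact hbound s hs)
      (convex_Icc 0 1) (Set.left_mem_Icc.mpr zero_le_one) ht
    simpa [ht.1, abs_of_nonneg] using h
  -- remainder as an integral
  have hInt : IntervalIntegrable ψ volume 0 1 := hψcont.intervalIntegrable 0 1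
  have heq : ∫ t in (0:ℝ)..1, ψ t = g y - g q := by
    rw [intervalIntegral.integral_eq_sub_of_hasDerivAt (fun t _ => hφ t) hInt]
    have e1 : c 1 = y := by rw [hcdef]; simp [hδdef]
    have e0 : c 0 = q := by rw [hcdef]; simp
    rw [e1, e0]
  have hψ0 : ψ 0 = fderiv ℝ g q δ := by rw [hψdef]; simp [hcdef]
  have hrem : g y - g q - fderiv ℝ g q δ = ∫ t in (0:ℝ)..1, (ψ t - ψ 0) := by
    rw [intervalIntegral.integral_sub hInt (intervalIntegrable_const), heq,
      intervalIntegral.integral_const, hψ0]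
    simp
  have hIntSub : IntervalIntegrable (fun t => ψ t - ψ 0) volume 0 1 :=
    hInt.sub intervalIntegrable_const
  have hIntKt : IntervalIntegrable (fun t => K * t) volume 0 1 :=
    (continuous_const.mul continuous_id).intervalIntegrable 0 1
  have hIntKt' : IntervalIntegrable (fun t => -(K * t)) volume 0 1 := hIntKt.neg
  have hKint : ∫ t in (0:ℝ)..1, K * t = K / 2 := by
    rw [intervalIntegral.integral_const_mul, integral_id]
    ring
  have hup : ∫ t in (0:ℝ)..1, (ψ t - ψ 0) ≤ K / 2 := by
    rw [← hKint]
    refine intervalIntegral.integral_mono_on zero_le_one hIntSub hIntKt fun t ht => ?_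
    have := hmvt t ht
    have := abs_le.mp this
    linarith [this.2]
  have hlo : -(K / 2) ≤ ∫ t in (0:ℝ)..1, (ψ t - ψ 0) := by
    have : ∫ t in (0:ℝ)..1, -(K * t) = -(K / 2) := by
      rw [intervalIntegral.integral_neg, hKint]
    rw [← this]
    refine intervalIntegral.integral_mono_on zero_le_one hIntKt' hIntSub fun t ht => ?_
    have := abs_le.mp (hmvt t ht)
    linarith [this.1]
  rw [abs_le]
  constructor
  · rw [hrem]
    calc -(1/2 * F * frob (S⁻¹ * Q)) = -(K/2) := by rw [hKdef]; ring
      _ ≤ _ := hlo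
  · rw [hrem]
    calc ∫ t in (0:ℝ)..1, (ψ t - ψ 0) ≤ K/2 := hup
      _ = 1/2 * F * frob (S⁻¹ * Q) := by rw [hKdef]; ring
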